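/- arXiv:2312.05242 — 5 statements merged into one kernel-verified Lean document; each statement's English description precedes it below -/
import Mathlib

section
/- For a hypergraph G and an independent subset s of G, the connected component of the graph Γ_G containing s consists exactly of those independent subsets t of G whose symmetric difference with s is finite. Here Γ_G is the graph whose vertices are independent subsets of G, with two subsets adjacent iff their symmetric difference has exactly one element. -/
open scoped symmDiff

variable {V : Type*}

def Indep (E : Set (Finset V)) (s : Set V) : Prop := ∀ e ∈ E, ¬ ((e : Set V) ⊆ s)

def SimpleHG (E : Set (Finset V)) : Prop :=
  (∀ e ∈ E, 1 < e.card) ∧ ∀ e ∈ E, ∀ e' ∈ E, e ⊆ e' → e = e'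

def LocFin (E : Set (Finset V)) : Prop := ∀ v : V, {e ∈ E | v ∈ e}.Finite

def Nbr (E : Set (Finset V)) (v w : V) : Prop := ∃ e ∈ E, v ∈ e ∧ w ∈ e

def Gamma (E : Set (Finset V)) : SimpleGraph {s : Set V // Indep E s} where
  Adj s t := ∃ v, s.1 ∆ t.1 = {v}
  symm := ⟨fun s t ⟨v, h⟩ => ⟨v, by rwa [symmDiff_comm]⟩⟩
  loopless := ⟨fun s ⟨v, h⟩ => by
    rw [symmDiff_self] at h
    exact absurd h.symm (Set.singleton_ne_empty v)⟩

def Comp (E : Set (Finset V)) (s : Set V) : Set {t : Set V // Indep E t} :=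
  {t | (s ∆ t.1).Finite}

def GammaComp (E : Set (Finset V)) (s : Set V) : SimpleGraph (Comp E s) :=
  (Gamma E).induce (Comp E s)

def xset (E : Set (Finset V)) (s : Set V) (v : V) : Set V :=
  s \ insert v {w | Nbr E v w}

def yset (E : Set (Finset V)) (s : Set V) (v : V) : Set V :=
  insert v (xset E s v)

def IsIsoHG {V W : Type*} (ES : Set (Finset V)) (ET : Set (Finset W)) (f : V → W) : Prop :=
  Function.Bijective f ∧ ∀ e : Finset V, e ∈ ES ↔ ∃ e' ∈ ET, (e' : Set W) = f '' (e : Set V)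

lemma indep_mono {E : Set (Finset V)} {s t : Set V} (h : s ⊆ t) (ht : Indep E t) : Indep E s :=
  fun e he hsub => ht e he (fun x hx => h (hsub hx))

lemma walk_finite {E : Set (Finset V)} :
    ∀ {a b : {s : Set V // Indep E s}}, (Gamma E).Walk a b → (a.1 ∆ b.1).Finite := by
  intro a b w
  induction w with
  | nil => simp
  | cons h p ih =>
    obtain ⟨v, hv⟩ := h
    exact Set.Finite.subset ((hv ▸ Set.finite_singleton v).union ih) (symmDiff_triangle _ _ _)

lemma reach_sdiff {E : Set (Finset V)} {u : Set V} (hu : Indep E u) (F : Set V)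
    (hF : F.Finite) :
    ∀ (hFu : F ⊆ u),
      (Gamma E).Reachable ⟨u \ F, indep_mono Set.diff_subset hu⟩ ⟨u, hu⟩ := by
  induction F, hF using Set.Finite.induction_on with
  | empty =>
    intro _
    have : (⟨u \ ∅, indep_mono Set.diff_subset hu⟩ : {s : Set V // Indep E s}) = ⟨u, hu⟩ :=
      Subtype.ext (by simp)
    rw [this]
  | @insert x F hx hFfin ih =>
    intro hFu
    have hxu : x ∈ u := hFu (Set.mem_insert x F)
    have hF'u : F ⊆ u := fun y hy => hFu (Set.mem_insert_of_mem x hy)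
    have hadj : (Gamma E).Adj ⟨u \ insert x F, indep_mono Set.diff_subset hu⟩
        ⟨u \ F, indep_mono Set.diff_subset hu⟩ := by
      refine ⟨x, ?_⟩
      ext y
      simp only [Set.mem_symmDiff, Set.mem_diff, Set.mem_insert_iff, Set.mem_singleton_iff]
      constructor
      · rintro (⟨⟨hyu, hni⟩, h2⟩ | ⟨⟨hyu, hyF⟩, h2⟩)
        · exact absurd ⟨hyu, fun h => hni (Or.inr h)⟩ h2
        · by_contra hne
          exact h2 ⟨hyu, fun h => h.elim hne hyF⟩
      · rintro rfl
        exact Or.inr ⟨⟨hxu, hx⟩, fun h => h.2 (Or.inl rfl)⟩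
    exact hadj.reachable.trans (ih hF'u)

theorem stmt0 (E : Set (Finset V)) (s t : Set V) (hs : Indep E s) (ht : Indep E t) :
    (Gamma E).Reachable ⟨s, hs⟩ ⟨t, ht⟩ ↔ (s ∆ t).Finite := by
  constructor
  · rintro ⟨w⟩; exact walk_finite w
  · intro hfin
    have hst : (s \ t).Finite := hfin.subset (by rw [Set.symmDiff_def]; exact Set.subset_union_left)
    have hts : (t \ s).Finite := hfin.subset (by rw [Set.symmDiff_def]; exact Set.subset_union_right)
    have h1 := reach_sdiff hs (s \ t) hst Set.diff_subset
    have h2 := reach_sdiff ht (t \ s) hts Set.diff_subset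
    have key : (⟨s \ (s \ t), indep_mono Set.diff_subset hs⟩ : {a : Set V // Indep E a}) =
        ⟨t \ (t \ s), indep_mono Set.diff_subset ht⟩ := by
      apply Subtype.ext
      ext y; simp only [Set.mem_diff, not_and, not_not]; tauto
    exact h1.symm.trans (key ▸ h2)
end

section
/- Let S and T be simple, locally finite hypergraphs, s and t independent subsets, and g an isomorphism from the connected component Γ_S(s) to the connected component Γ_T(t). Suppose that for some vertex v of S, g(x_s(v)) ⊕ g(y_s(v)) = {f(v)} defines f(v). Then for all a, b in Γ_S(s) with a ⊕ b = {v}, one has g(a) ⊕ g(b) = {f(v)}. That is, the single vertex by which g(a) and g(b) differ depends only on v, not on the pair (a,b). -/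
open scoped symmDiff

variable {V : Type*}

-- auxiliary lemmas
lemma my_insert_symmDiff {a : Set V} {v : V} (h : v ∉ a) : insert v a = a ∆ {v} := by
  ext w; simp [Set.mem_symmDiff]; by_cases hw : w = v <;> simp [hw, h]

lemma Indep.my_mono {E : Set (Finset V)} {a b : Set V} (hab : a ⊆ b) (hb : Indep E b) :
    Indep E a := fun e he hsub => hb e he (hsub.trans hab)

lemma my_nbr_finite {E : Set (Finset V)} (hlf : LocFin E) (v : V) : {w | Nbr E v w}.Finite := by
  have h : {w | Nbr E v w} ⊆ ⋃ e ∈ {e ∈ E | v ∈ e}, (e : Set V) := by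
    rintro w ⟨e, he, hv, hw⟩
    exact Set.mem_biUnion ⟨he, hv⟩ hw
  exact (Set.Finite.biUnion (hlf v) (fun e _ => e.finite_toSet)).subset h

lemma my_comp_insert {s a : Set V} {v : V} (hv : v ∉ a)
    (h : (s ∆ a).Finite) : (s ∆ insert v a).Finite := by
  rw [my_insert_symmDiff hv, ← symmDiff_assoc]
  exact ((h.union (Set.finite_singleton v)).subset (Set.symmDiff_subset_union))

-- the four-cycle / move lemma
lemma my_move {VS VT : Type*} {ES : Set (Finset VS)} {ET : Set (Finset VT)}
    {s : Set VS} {t : Set VT} (g : GammaComp ES s ≃g GammaComp ET t)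
    {v w : VS} {a a' : Set VS}
    (ha : Indep ES a) (hb : Indep ES (insert v a))
    (ha' : Indep ES a') (hb' : Indep ES (insert v a'))
    (hva : v ∉ a) (hva' : v ∉ a')
    (hCa : (⟨a, ha⟩ : {u : Set VS // Indep ES u}) ∈ Comp ES s)
    (hCb : (⟨insert v a, hb⟩ : {u : Set VS // Indep ES u}) ∈ Comp ES s)
    (hCa' : (⟨a', ha'⟩ : {u : Set VS // Indep ES u}) ∈ Comp ES s)
    (hCb' : (⟨insert v a', hb'⟩ : {u : Set VS // Indep ES u}) ∈ Comp ES s)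
    (hd : a ∆ a' = {w}) :
    (g ⟨⟨a, ha⟩, hCa⟩).1.1 ∆ (g ⟨⟨insert v a, hb⟩, hCb⟩).1.1 =
    (g ⟨⟨a', ha'⟩, hCa'⟩).1.1 ∆ (g ⟨⟨insert v a', hb'⟩, hCb'⟩).1.1 := by
  set A : Comp ES s := ⟨⟨a, ha⟩, hCa⟩ with hA
  set B : Comp ES s := ⟨⟨insert v a, hb⟩, hCb⟩ with hB
  set A' : Comp ES s := ⟨⟨a', ha'⟩, hCa'⟩ with hA'
  set B' : Comp ES s := ⟨⟨insert v a', hb'⟩, hCb'⟩ with hB'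
  have hvw : v ≠ w := by
    intro h; subst h
    have : v ∈ a ∆ a' := by rw [hd]; rfl
    rw [Set.mem_symmDiff] at this; tauto
  have adjAB : (GammaComp ES s).Adj A B := by
    refine ⟨v, ?_⟩
    rw [hA, hB]
    show a ∆ insert v a = {v}
    rw [my_insert_symmDiff hva, symmDiff_symmDiff_cancel_left]
  have adjAA' : (GammaComp ES s).Adj A A' := ⟨w, hd⟩
  have hBB' : (insert v a) ∆ (insert v a') = {w} := by
    rw [my_insert_symmDiff hva, my_insert_symmDiff hva',
      symmDiff_symmDiff_symmDiff_comm, symmDiff_self, symmDiff_bot, hd]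
  have adjBB' : (GammaComp ES s).Adj B B' := ⟨w, hBB'⟩
  have adjA'B' : (GammaComp ES s).Adj A' B' := by
    refine ⟨v, ?_⟩
    show a' ∆ insert v a' = {v}
    rw [my_insert_symmDiff hva', symmDiff_symmDiff_cancel_left]
  obtain ⟨p, hp⟩ := g.map_rel_iff.2 adjAB
  obtain ⟨p', hp'⟩ := g.map_rel_iff.2 adjA'B'
  obtain ⟨q, hq⟩ := g.map_rel_iff.2 adjAA'
  obtain ⟨r, hr⟩ := g.map_rel_iff.2 adjBB'
  simp only [Function.Embedding.coe_subtype] at hp hp' hq hr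
  have key : ({p} : Set VT) ∆ {p'} = {q} ∆ {r} := by
    rw [← hp, ← hp', ← hq, ← hr]
    exact symmDiff_symmDiff_symmDiff_comm _ _ _ _
  have hpp' : p = p' := by
    by_contra hne
    have hmem : p ∈ ({q} : Set VT) ∆ {r} := by
      rw [← key, Set.mem_symmDiff]
      simp [hne]
    rw [Set.mem_symmDiff] at hmem
    rcases hmem with ⟨hpq, _⟩ | ⟨hpr, _⟩
    · rw [Set.mem_singleton_iff] at hpq; subst hpq
      have h1 : ((g B : {u : Set VT // Indep ET u}) : Set VT) = ((g A' : {u : Set VT // Indep ET u}) : Set VT) :=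
        symmDiff_right_injective _ (hp.trans hq.symm)
      have hBA' : B = A' := g.injective (Subtype.ext (Subtype.ext h1))
      have h2 : insert v a = a' := congrArg (fun z : Comp ES s => (z.1 : Set VS)) hBA'
      exact hva' (h2 ▸ Set.mem_insert v a)
    · rw [Set.mem_singleton_iff] at hpr; subst hpr
      have h1 : ((g A : {u : Set VT // Indep ET u}) : Set VT) = ((g B' : {u : Set VT // Indep ET u}) : Set VT) :=
        symmDiff_right_injective _ (((symmDiff_comm _ _).trans hp).trans hr.symm)
      have hAB' : A = B' := g.injective (Subtype.ext (Subtype.ext h1))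
      have h2 : a = insert v a' := congrArg (fun z : Comp ES s => (z.1 : Set VS)) hAB'
      exact hva (h2 ▸ Set.mem_insert v a')
  show ((g A : {u : Set VT // Indep ET u}) : Set VT) ∆ _ = _
  rw [hp, hp', hpp']

lemma my_comp_move {V : Type*} {s a a' : Set V} {w : V}
    (h : (s ∆ a).Finite) (hd : a ∆ a' = {w}) : (s ∆ a').Finite := by
  refine ((h.union (hd ▸ Set.finite_singleton w)).subset ?_)
  exact symmDiff_triangle s a a'

lemma my_key {VS VT : Type*} {ES : Set (Finset VS)} {ET : Set (Finset VT)}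
    (hSlf : LocFin ES) {s : Set VS} {t : Set VT}
    (g : GammaComp ES s ≃g GammaComp ET t) (v : VS) (fv : VT)
    (hxI : Indep ES (xset ES s v)) (hyI : Indep ES (yset ES s v))
    (hxC : (⟨xset ES s v, hxI⟩ : {u : Set VS // Indep ES u}) ∈ Comp ES s)
    (hyC : (⟨yset ES s v, hyI⟩ : {u : Set VS // Indep ES u}) ∈ Comp ES s)
    (hdef : (g ⟨⟨xset ES s v, hxI⟩, hxC⟩).1.1 ∆ (g ⟨⟨yset ES s v, hyI⟩, hyC⟩).1.1 = {fv}) :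
    ∀ (n : ℕ) (a : Set VS) (ha : Indep ES a) (hb : Indep ES (insert v a)) (hva : v ∉ a)
      (hCa : (⟨a, ha⟩ : {u : Set VS // Indep ES u}) ∈ Comp ES s)
      (hCb : (⟨insert v a, hb⟩ : {u : Set VS // Indep ES u}) ∈ Comp ES s),
      (a ∆ xset ES s v).ncard = n →
      (g ⟨⟨a, ha⟩, hCa⟩).1.1 ∆ (g ⟨⟨insert v a, hb⟩, hCb⟩).1.1 = {fv} := by
  set x := xset ES s v with hx
  have hvx : v ∉ x := by simp [hx, xset]
  have hsx : (s ∆ x).Finite := by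
    refine ((my_nbr_finite hSlf v).insert v).subset ?_
    intro u hu
    rw [Set.mem_symmDiff] at hu
    rcases hu with ⟨hus, hux⟩ | ⟨hux, hus⟩
    · by_contra hc
      exact hux ⟨hus, hc⟩
    · exact absurd hux.1 hus
  intro n a ha hb hva hCa hCb hcard
  induction n generalizing a with
  | zero =>
    have hsa : (s ∆ a).Finite := hCa
    have hax : (a ∆ x).Finite :=
      (((symmDiff_comm s a ▸ hsa).union hsx).subset (symmDiff_triangle a s x))
    have hae : a ∆ x = ∅ := (Set.ncard_eq_zero hax).mp hcard
    have hax2 : a = x := by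
      have := symmDiff_eq_bot.mp (by rw [Set.bot_eq_empty]; exact hae)
      exact this
    subst hax2
    exact hdef
  | succ n ih =>
    have hsa : (s ∆ a).Finite := hCa
    have hax : (a ∆ x).Finite :=
      (((symmDiff_comm s a ▸ hsa).union hsx).subset (symmDiff_triangle a s x))
    by_cases hne : (a \ x).Nonempty
    · obtain ⟨w, hwa, hwx⟩ := hne
      have hwv : v ≠ w := fun h => hva (h ▸ hwa)
      set a' := a \ {w} with ha'def
      have ha' : Indep ES a' := Indep.my_mono Set.diff_subset ha
      have hb' : Indep ES (insert v a') :=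
        Indep.my_mono (Set.insert_subset_insert Set.diff_subset) hb
      have hva' : v ∉ a' := fun h => hva h.1
      have hd : a ∆ a' = {w} := by
        ext u
        simp only [ha'def, Set.mem_symmDiff, Set.mem_diff, Set.mem_singleton_iff]
        constructor
        · rintro (⟨hu1, hu2⟩ | ⟨⟨hu1, _⟩, hu3⟩)
          · by_contra hc; exact hu2 ⟨hu1, hc⟩
          · exact absurd hu1 hu3
        · rintro rfl; exact Or.inl ⟨hwa, fun hc => hc.2 rfl⟩
      have hCa' : (⟨a', ha'⟩ : {u : Set VS // Indep ES u}) ∈ Comp ES s :=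
        my_comp_move hsa hd
      have hCb' : (⟨insert v a', hb'⟩ : {u : Set VS // Indep ES u}) ∈ Comp ES s :=
        my_comp_insert hva' hCa'
      have hmem : w ∈ a ∆ x := Or.inl ⟨hwa, hwx⟩
      have hdiff : a' ∆ x = (a ∆ x) \ {w} := by
        ext u
        simp only [ha'def, Set.mem_symmDiff, Set.mem_diff, Set.mem_singleton_iff]
        constructor
        · rintro (⟨⟨hu1, hu2⟩, hu3⟩ | ⟨hu1, hu4⟩)
          · exact ⟨Or.inl ⟨hu1, hu3⟩, hu2⟩
          · refine ⟨Or.inr ⟨hu1, fun hc => hu4 ⟨hc, fun h => hwx (h ▸ hu1)⟩⟩,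
              fun h => hwx (h ▸ hu1)⟩
        · rintro ⟨⟨hu1, hu2⟩ | ⟨hu1, hu2⟩, hu3⟩
          · exact Or.inl ⟨⟨hu1, hu3⟩, hu2⟩
          · exact Or.inr ⟨hu1, fun hc => hu2 hc.1⟩
      have hcard' : (a' ∆ x).ncard = n := by
        rw [hdiff, Set.ncard_diff_singleton_of_mem hmem, hcard]
        omega
      exact (my_move g ha hb ha' hb' hva hva' hCa hCb hCa' hCb' hd).trans
        (ih a' ha' hb' hva' hCa' hCb' hcard')
    · have hsub : a ⊆ x := by
        intro u hu
        by_contra hc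
        exact hne ⟨u, hu, hc⟩
      have hnonempty : (a ∆ x).Nonempty := by
        apply Set.nonempty_of_ncard_ne_zero
        rw [hcard]; omega
      obtain ⟨w, hw⟩ := hnonempty
      rw [Set.mem_symmDiff] at hw
      rcases hw with ⟨hwa, hwx⟩ | ⟨hwx, hwa⟩
      · exact absurd ⟨w, hwa, hwx⟩ hne
      have hwv : v ≠ w := fun h => hvx (h ▸ hwx)
      set a' := insert w a with ha'def
      have ha'sub : a' ⊆ x := Set.insert_subset hwx hsub
      have ha' : Indep ES a' := Indep.my_mono ha'sub hxI
      have hb' : Indep ES (insert v a') := by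
        refine Indep.my_mono ?_ hyI
        exact Set.insert_subset_insert ha'sub
      have hva' : v ∉ a' := by
        rintro (h | h)
        · exact hwv h
        · exact hva h
      have hd : a ∆ a' = {w} := by
        rw [ha'def, my_insert_symmDiff hwa, symmDiff_symmDiff_cancel_left]
      have hCa' : (⟨a', ha'⟩ : {u : Set VS // Indep ES u}) ∈ Comp ES s :=
        my_comp_move hsa hd
      have hCb' : (⟨insert v a', hb'⟩ : {u : Set VS // Indep ES u}) ∈ Comp ES s :=
        my_comp_insert hva' hCa'
      have hmem : w ∈ a ∆ x := Or.inr ⟨hwx, hwa⟩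
      have hdiff : a' ∆ x = (a ∆ x) \ {w} := by
        ext u
        simp only [ha'def, Set.mem_symmDiff, Set.mem_diff, Set.mem_singleton_iff,
          Set.mem_insert_iff]
        constructor
        · rintro (⟨hu1 | hu1, hu2⟩ | ⟨hu1, hu2⟩)
          · exact absurd (hu1 ▸ hwx) hu2
          · exact absurd (hsub hu1) hu2
          · refine ⟨Or.inr ⟨hu1, fun h => hu2 (Or.inr h)⟩, fun h => hu2 (Or.inl h)⟩
        · rintro ⟨⟨hu1, hu2⟩ | ⟨hu1, hu2⟩, hu3⟩
          · exact absurd (hsub hu1) hu2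
          · exact Or.inr ⟨hu1, fun hc => hc.elim hu3 hu2⟩
      have hcard' : (a' ∆ x).ncard = n := by
        rw [hdiff, Set.ncard_diff_singleton_of_mem hmem, hcard]
        omega
      exact (my_move g ha hb ha' hb' hva hva' hCa hCb hCa' hCb' hd).trans
        (ih a' ha' hb' hva' hCa' hCb' hcard')

theorem stmt2' {VS VT : Type*} (ES : Set (Finset VS)) (ET : Set (Finset VT))
    (hSlf : LocFin ES)
    (s : Set VS) (t : Set VT)
    (g : GammaComp ES s ≃g GammaComp ET t)
    (v : VS) (fv : VT)
    (hxI : Indep ES (xset ES s v)) (hyI : Indep ES (yset ES s v))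
    (hxC : (⟨xset ES s v, hxI⟩ : {u : Set VS // Indep ES u}) ∈ Comp ES s)
    (hyC : (⟨yset ES s v, hyI⟩ : {u : Set VS // Indep ES u}) ∈ Comp ES s)
    (hdef : (g ⟨⟨xset ES s v, hxI⟩, hxC⟩).1.1 ∆ (g ⟨⟨yset ES s v, hyI⟩, hyC⟩).1.1 = {fv}) :
    ∀ (a b : Comp ES s), a.1.1 ∆ b.1.1 = {v} → (g a).1.1 ∆ (g b).1.1 = {fv} := by
  intro a b hab
  have hv : v ∈ a.1.1 ∆ b.1.1 := by rw [hab]; rfl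
  rw [Set.mem_symmDiff] at hv
  rcases hv with ⟨hva, hvb⟩ | ⟨hvb, hva⟩
  · -- v ∈ a, v ∉ b : b ∆ a = {v}, a = insert v b
    rw [symmDiff_comm] at hab
    rw [symmDiff_comm]
    have hba : a.1.1 = insert v b.1.1 := by
      have h1 : b.1.1 ∆ a.1.1 = b.1.1 ∆ (b.1.1 ∆ {v}) := by
        rw [symmDiff_symmDiff_cancel_left, hab]
      have h2 := symmDiff_right_injective b.1.1 h1
      rw [h2, ← my_insert_symmDiff hvb]
    obtain ⟨⟨a1, haI⟩, haC⟩ := a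
    simp only at hba
    subst hba
    exact my_key hSlf g v fv hxI hyI hxC hyC hdef _ b.1.1 b.1.2 haI hvb b.2 haC rfl
  · have hba : b.1.1 = insert v a.1.1 := by
      have h1 : a.1.1 ∆ b.1.1 = a.1.1 ∆ (a.1.1 ∆ {v}) := by
        rw [symmDiff_symmDiff_cancel_left, hab]
      have h2 := symmDiff_right_injective a.1.1 h1
      rw [h2, ← my_insert_symmDiff hva]
    obtain ⟨⟨b1, hbI⟩, hbC⟩ := b
    simp only at hba
    subst hba
    exact my_key hSlf g v fv hxI hyI hxC hyC hdef _ a.1.1 a.1.2 hbI hva a.2 hbC rfl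

theorem stmt2 {VS VT : Type*} (ES : Set (Finset VS)) (ET : Set (Finset VT))
    (hSsimp : SimpleHG ES) (hTsimp : SimpleHG ET) (hSlf : LocFin ES) (hTlf : LocFin ET)
    (s : Set VS) (t : Set VT) (hs : Indep ES s) (ht : Indep ET t)
    (g : GammaComp ES s ≃g GammaComp ET t)
    (v : VS) (fv : VT)
    (hxI : Indep ES (xset ES s v)) (hyI : Indep ES (yset ES s v))
    (hxC : (⟨xset ES s v, hxI⟩ : {u : Set VS // Indep ES u}) ∈ Comp ES s)
    (hyC : (⟨yset ES s v, hyI⟩ : {u : Set VS // Indep ES u}) ∈ Comp ES s)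
    (hdef : (g ⟨⟨xset ES s v, hxI⟩, hxC⟩).1.1 ∆ (g ⟨⟨yset ES s v, hyI⟩, hyC⟩).1.1 = {fv}) :
    ∀ (a b : Comp ES s), a.1.1 ∆ b.1.1 = {v} → (g a).1.1 ∆ (g b).1.1 = {fv} := by
  exact stmt2' ES ET hSlf s t g v fv hxI hyI hxC hyC hdef
end

section
/- Let S be a locally finite hypergraph, s an independent subset of S, and a a finite subset of the vertices of S. Then there exists an independent set r with finite symmetric difference from s (i.e., r ∈ Γ_S(s)) such that r contains no element of a and no neighbor of any element of a. -/
open scoped symmDiff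

variable {V : Type*}

theorem stmt6 (E : Set (Finset V)) (hlf : LocFin E) (s : Set V) (hs : Indep E s)
    (a : Set V) (ha : a.Finite) :
    ∃ r : Set V, Indep E r ∧ (s ∆ r).Finite ∧ (∀ w ∈ a, w ∉ r) ∧
      ∀ w ∈ a, ∀ v, Nbr E w v → v ∉ r := by
  refine ⟨s \ (a ∪ {v | ∃ w ∈ a, Nbr E w v}), ?_, ?_, ?_, ?_⟩
  · intro e he hsub
    exact hs e he (hsub.trans Set.diff_subset)
  · have hsub : s ∆ (s \ (a ∪ {v | ∃ w ∈ a, Nbr E w v})) ⊆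
        a ∪ {v | ∃ w ∈ a, Nbr E w v} := by
      intro x hx
      rcases hx with ⟨hxs, hxr⟩ | ⟨hxr, hxs⟩
      · by_contra h; exact hxr ⟨hxs, h⟩
      · exact absurd hxr.1 hxs
    refine Set.Finite.subset ?_ hsub
    refine ha.union ?_
    have : {v | ∃ w ∈ a, Nbr E w v} ⊆ ⋃ w ∈ a, ⋃ e ∈ {e ∈ E | w ∈ e}, (e : Set V) := by
      rintro v ⟨w, hw, e, he, hwe, hve⟩
      exact Set.mem_biUnion hw (Set.mem_biUnion ⟨he, hwe⟩ hve)
    refine Set.Finite.subset ?_ this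
    exact ha.biUnion fun w _ => (hlf w).biUnion fun e _ => e.finite_toSet
  · intro w hw hr
    exact hr.2 (Or.inl hw)
  · intro w hw v hn hr
    exact hr.2 (Or.inr ⟨w, hw, hn⟩)
end

section
/- Let S and T be simple, locally finite hypergraphs with no isolated vertices, and let g be an isomorphism from a connected component Γ_S(s) of Γ_S to a connected component Γ_T(t) of Γ_T. Then there exists a hypergraph isomorphism f : S → T such that g(r) = f[r] for every vertex r of Γ_S(s). -/
open scoped symmDiff

attribute [local instance] Classical.propDecidable

variable {V : Type*}

/-! ### Auxiliary set/symmDiff lemmas -/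

section SetLemmas
variable {a b : Set V} {v u : V}

lemma sd_insert (hv : v ∉ a) : a ∆ (insert v a) = {v} := by
  ext x
  simp only [Set.mem_symmDiff, Set.mem_insert_iff, Set.mem_singleton_iff]
  constructor
  · rintro (⟨hx, h⟩ | ⟨(rfl | hx), hx'⟩) <;> tauto
  · rintro rfl; tauto

lemma sd_erase (hv : v ∈ a) : a ∆ (a \ {v}) = {v} := by
  ext x
  simp only [Set.mem_symmDiff, Set.mem_diff, Set.mem_singleton_iff]
  constructor
  · rintro (⟨hx, h⟩ | ⟨⟨hx, hne⟩, hx'⟩) <;> tauto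
  · rintro rfl; tauto

lemma sd_pair (h : v ≠ u) : ({v} : Set V) ∆ {u} = {v, u} := by
  ext x
  simp only [Set.mem_symmDiff, Set.mem_singleton_iff, Set.mem_insert_iff]
  constructor
  · rintro (⟨rfl, _⟩ | ⟨rfl, _⟩) <;> tauto
  · rintro (rfl | rfl) <;> tauto

lemma eq_of_sd {w : Set V} (h : a ∆ b = w) : b = a ∆ w := by
  rw [← h, symmDiff_symmDiff_cancel_left]

lemma sd_singleton_not_mem (hv : v ∉ a) : a ∆ {v} = insert v a := by
  rw [← sd_insert hv, symmDiff_symmDiff_cancel_left]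

lemma sd_singleton_mem (hv : v ∈ a) : a ∆ {v} = a \ {v} := by
  have h := sd_erase hv
  have := eq_of_sd h
  exact this.symm

lemma sd_trans (x y z : Set V) : (x ∆ y) ∆ (y ∆ z) = x ∆ z := by
  rw [symmDiff_assoc, symmDiff_symmDiff_cancel_left]

lemma sd_cancel_left (x y z : Set V) : (x ∆ y) ∆ (x ∆ z) = y ∆ z := by
  rw [symmDiff_comm x y, sd_trans]

lemma sd_diff_singleton (hu : u ∉ b) : (a \ {u}) ∆ b = (a ∆ b) \ {u} := by
  ext x
  simp only [Set.mem_symmDiff, Set.mem_diff, Set.mem_singleton_iff]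
  constructor
  · rintro (⟨⟨hx, hne⟩, h⟩ | ⟨hx, h⟩)
    · tauto
    · refine ⟨Or.inr ⟨hx, fun hh => h ⟨hh, ?_⟩⟩, ?_⟩ <;> rintro rfl <;> exact hu hx
  · rintro ⟨(⟨h1, h2⟩ | ⟨h1, h2⟩), hne⟩ <;> tauto

lemma diff_sd_diff (hu1 : u ∈ a) (hu2 : u ∈ b) : (a \ {u}) ∆ (b \ {u}) = (a ∆ b) \ {u} := by
  ext x
  simp only [Set.mem_symmDiff, Set.mem_diff, Set.mem_singleton_iff]
  constructor
  · rintro (⟨⟨h1, h2⟩, h3⟩ | ⟨⟨h1, h2⟩, h3⟩) <;> tauto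
  · rintro ⟨(⟨h1, h2⟩ | ⟨h1, h2⟩), hne⟩ <;> tauto

lemma sd_union_subset (s z : Set V) (A : Set V) : s ∆ (z ∪ A) ⊆ (s ∆ z) ∪ A := by
  intro x hx
  rcases Set.mem_symmDiff.1 hx with ⟨h1, h2⟩ | ⟨h1, h2⟩
  · exact Or.inl (Set.mem_symmDiff.2 (Or.inl ⟨h1, fun h => h2 (Or.inl h)⟩))
  · rcases h1 with h | h
    · exact Or.inl (Set.mem_symmDiff.2 (Or.inr ⟨h, h2⟩))
    · exact Or.inr h

lemma sd_inter_subset (s a b : Set V) : s ∆ (a ∩ b) ⊆ (s ∆ a) ∪ (s ∆ b) := by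
  intro x hx
  rcases Set.mem_symmDiff.1 hx with ⟨h1, h2⟩ | ⟨h1, h2⟩
  · by_cases ha : x ∈ a
    · exact Or.inr (Set.mem_symmDiff.2 (Or.inl ⟨h1, fun hb => h2 ⟨ha, hb⟩⟩))
    · exact Or.inl (Set.mem_symmDiff.2 (Or.inl ⟨h1, ha⟩))
  · exact Or.inl (Set.mem_symmDiff.2 (Or.inr ⟨h1.1, h2⟩))

lemma sd_diff_subset (s a : Set V) (u : V) : s ∆ (a \ {u}) ⊆ (s ∆ a) ∪ {u} := by
  intro x hx
  rcases Set.mem_symmDiff.1 hx with ⟨h1, h2⟩ | ⟨h1, h2⟩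
  · by_cases ha : x ∈ a
    · rcases eq_or_ne x u with rfl | hne
      · exact Or.inr rfl
      · exact absurd ⟨ha, hne⟩ h2
    · exact Or.inl (Set.mem_symmDiff.2 (Or.inl ⟨h1, ha⟩))
  · exact Or.inl (Set.mem_symmDiff.2 (Or.inr ⟨h1.1, h2⟩))

end SetLemmas

/-! ### One-sided hypergraph lemmas -/

section OneSide
variable {E : Set (Finset V)} {s : Set V} {e : Finset V}

lemma indep_mono_s8 {a b : Set V} (hab : a ⊆ b) (hb : Indep E b) : Indep E a :=
  fun e he hsub => hb e he (hsub.trans hab)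

lemma nbr_finite (hlf : LocFin E) (v : V) : {w | Nbr E v w}.Finite := by
  have : {w | Nbr E v w} ⊆ ⋃ e ∈ {e ∈ E | v ∈ e}, (e : Set V) := by
    rintro w ⟨e, he, hv, hw⟩
    exact Set.mem_biUnion ⟨he, hv⟩ hw
  exact Set.Finite.subset ((hlf v).biUnion (fun e _ => e.finite_toSet)) this

lemma xset_indep (hs : Indep E s) (v : V) : Indep E (xset E s v) :=
  indep_mono_s8 Set.diff_subset hs

lemma v_not_mem_xset (v : V) : v ∉ xset E s v := fun h => h.2 (Set.mem_insert v _)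

lemma yset_indep (hsimp : SimpleHG E) (hs : Indep E s) (v : V) : Indep E (yset E s v) := by
  intro e he hsub
  by_cases hv : v ∈ e
  · obtain ⟨u, hu, hne⟩ : ∃ u ∈ e, u ≠ v := by
      obtain ⟨a, ha, b, hb, hab⟩ := Finset.one_lt_card.1 (hsimp.1 e he)
      rcases eq_or_ne a v with rfl | h
      · exact ⟨b, hb, fun h => hab h.symm⟩
      · exact ⟨a, ha, h⟩
    have : u ∈ yset E s v := hsub hu
    rcases this with h | h
    · exact hne h
    · exact h.2 (Set.mem_insert_of_mem _ ⟨e, he, hv, hu⟩)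
  · refine hs e he (fun x hx => ?_)
    rcases hsub hx with h | h
    · exact absurd (h ▸ hx) hv
    · exact h.1

lemma xset_comp (hlf : LocFin E) (v : V) : (s ∆ xset E s v).Finite := by
  have h1 : s ∆ xset E s v ⊆ insert v {w | Nbr E v w} := by
    intro x hx
    rcases Set.mem_symmDiff.1 hx with ⟨hxs, hxn⟩ | ⟨hxx, _⟩
    · by_contra h; exact hxn ⟨hxs, h⟩
    · exact absurd hxx.1 (fun _ => hxx.2 (by tauto))
  exact (((nbr_finite hlf v).insert v)).subset h1

lemma yset_comp (hlf : LocFin E) (v : V) : (s ∆ yset E s v).Finite := by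
  have h1 : s ∆ yset E s v ⊆ insert v (s ∆ xset E s v) := by
    intro x hx
    rcases Set.mem_symmDiff.1 hx with ⟨hxs, hxn⟩ | ⟨hxy, hxs⟩
    · rcases eq_or_ne x v with rfl | h
      · exact Set.mem_insert _ _
      · exact Set.mem_insert_of_mem _
          (Set.mem_symmDiff.2 (Or.inl ⟨hxs, fun hh => hxn (Set.mem_insert_of_mem _ hh)⟩))
    · rcases hxy with rfl | h
      · exact Set.mem_insert _ _
      · exact absurd h.1 hxs
  exact (((xset_comp hlf v).insert v)).subset h1

lemma yset_sd_xset (v : V) : yset E s v ∆ xset E s v = {v} := by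
  have := sd_insert (v_not_mem_xset (E := E) (s := s) v)
  rw [symmDiff_comm] at this
  exact this

def zset (E : Set (Finset V)) (s : Set V) (e : Finset V) : Set V :=
  s \ ⋃ u ∈ (e : Set V), insert u {w | Nbr E u w}

lemma zset_indep (hs : Indep E s) : Indep E (zset E s e) := indep_mono_s8 Set.diff_subset hs

lemma zset_comp (hlf : LocFin E) : (s ∆ zset E s e).Finite := by
  have h1 : s ∆ zset E s e ⊆ ⋃ u ∈ (e : Set V), insert u {w | Nbr E u w} := by
    intro x hx
    rcases Set.mem_symmDiff.1 hx with ⟨hxs, hxn⟩ | ⟨hxz, hxs⟩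
    · by_contra h; exact hxn ⟨hxs, h⟩
    · exact absurd hxz.1 hxs
  exact (Set.Finite.biUnion e.finite_toSet (fun u _ => (nbr_finite hlf u).insert u)).subset h1

lemma mem_e_not_zset {u : V} (hu : u ∈ e) : u ∉ zset E s e := by
  intro h
  exact h.2 (Set.mem_biUnion (by exact_mod_cast hu) (Set.mem_insert u _))

lemma nbr_not_zset {u w : V} (hu : u ∈ e) (hw : Nbr E u w) : w ∉ zset E s e := by
  intro h
  exact h.2 (Set.mem_biUnion (by exact_mod_cast hu) (Set.mem_insert_of_mem _ hw))

lemma zext_indep (hsimp : SimpleHG E) (hs : Indep E s) (he : e ∈ E)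
    {A : Finset V} (hA : A ⊆ e) (hne : A ≠ e) : Indep E (zset E s e ∪ (A : Set V)) := by
  intro e'' he'' hsub
  by_cases hmeet : ∃ x ∈ e'', x ∈ e
  · obtain ⟨x0, hx0e'', hx0e⟩ := hmeet
    have hsube : (e'' : Set V) ⊆ (e : Set V) := by
      intro y hy
      rcases hsub hy with hz | hA'
      · exact absurd hz
          (nbr_not_zset hx0e ⟨e'', he'', by exact_mod_cast hx0e'', by exact_mod_cast hy⟩)
      · exact (Finset.coe_subset.2 hA) hA'
    have : e'' = e := hsimp.2 e'' he'' e he (by exact_mod_cast hsube)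
    subst this
    apply hne
    apply le_antisymm hA
    intro y hy
    rcases hsub (by exact_mod_cast hy) with hz | hA'
    · exact absurd hz (mem_e_not_zset hy)
    · exact_mod_cast hA'
  · push_neg at hmeet
    refine hs e'' he'' (fun y hy => ?_)
    rcases hsub hy with hz | hA'
    · exact hz.1
    · exact absurd (hA (by exact_mod_cast hA')) (hmeet y hy)

def mkC (r : Set V) (h1 : Indep E r) (h2 : (s ∆ r).Finite) : ↥(Comp E s) := ⟨⟨r, h1⟩, h2⟩

lemma gamma_adj {a b : ↥(Comp E s)} : (GammaComp E s).Adj a b ↔ ∃ v, a.1.1 ∆ b.1.1 = {v} :=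
  Iff.rfl

lemma comp_fin (a : ↥(Comp E s)) : (s ∆ a.1.1).Finite := a.2

lemma comp_sd_fin (a b : ↥(Comp E s)) : (a.1.1 ∆ b.1.1).Finite := by
  have h := symmDiff_triangle a.1.1 s b.1.1
  have h2 : (a.1.1 ∆ s).Finite := by rw [symmDiff_comm]; exact a.2
  exact (h2.union b.2).subset h

lemma compC_ext {a b : ↥(Comp E s)} (h : a.1.1 = b.1.1) : a = b := Subtype.ext (Subtype.ext h)

end OneSide

/-! ### Two-sided lemmas involving the isomorphism -/

section TwoSide
variable {VS VT : Type*} {ES : Set (Finset VS)} {ET : Set (Finset VT)} {s : Set VS} {t : Set VT}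

lemma g_inj (g : GammaComp ES s ≃g GammaComp ET t) {a b : ↥(Comp ES s)}
    (h : (g a).1.1 = (g b).1.1) : a = b :=
  g.toEquiv.injective (compC_ext h)

lemma square (g : GammaComp ES s ≃g GammaComp ET t) {a b c d : ↥(Comp ES s)} {v u : VS}
    (hvu : v ≠ u) (hab : a.1.1 ∆ b.1.1 = {v}) (hcd : c.1.1 ∆ d.1.1 = {v})
    (hac : a.1.1 ∆ c.1.1 = {u}) (hbd : b.1.1 ∆ d.1.1 = {u}) :
    (g a).1.1 ∆ (g b).1.1 = (g c).1.1 ∆ (g d).1.1 := by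
  obtain ⟨v1, hv1⟩ := gamma_adj.1 (g.map_rel_iff.2 (gamma_adj.2 ⟨v, hab⟩))
  obtain ⟨v2, hv2⟩ := gamma_adj.1 (g.map_rel_iff.2 (gamma_adj.2 ⟨v, hcd⟩))
  obtain ⟨u1, hu1⟩ := gamma_adj.1 (g.map_rel_iff.2 (gamma_adj.2 ⟨u, hac⟩))
  obtain ⟨u2, hu2⟩ := gamma_adj.1 (g.map_rel_iff.2 (gamma_adj.2 ⟨u, hbd⟩))
  have hADne : (g a).1.1 ∆ (g d).1.1 ≠ ∅ := by
    intro h0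
    have had : a = d := g_inj g (symmDiff_eq_bot.1 h0)
    have hb0 : ({v} : Set VS) ∆ {u} = ⊥ := by
      rw [← hab, ← hbd, sd_trans, had, symmDiff_self]
    exact hvu (Set.singleton_eq_singleton_iff.1 (symmDiff_eq_bot.1 hb0))
  have hkey : ({v1} : Set VT) ∆ {u2} = {u1} ∆ {v2} := by
    rw [← hv1, ← hu2, sd_trans, ← hu1, ← hv2, sd_trans]
  have hAD : (g a).1.1 ∆ (g d).1.1 = ({v1} : Set VT) ∆ {u2} := by
    rw [← hv1, ← hu2, sd_trans]
  have hv1u2 : v1 ≠ u2 := by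
    rintro rfl
    rw [symmDiff_self] at hAD
    exact hADne hAD
  have hu1v2 : u1 ≠ v2 := by
    rintro rfl
    have hkey2 := hkey
    rw [symmDiff_self] at hkey2
    exact hv1u2 (Set.singleton_eq_singleton_iff.1 (symmDiff_eq_bot.1 hkey2))
  rw [sd_pair hv1u2, sd_pair hu1v2] at hkey
  have hv1mem : v1 ∈ ({u1, v2} : Set VT) := hkey ▸ Set.mem_insert _ _
  rcases hv1mem with h | h
  · -- v1 = u1 : impossible
    exfalso
    have hgbc : (g b).1.1 = (g c).1.1 := by
      have := hv1.trans (by rw [h, ← hu1])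
      exact symmDiff_right_injective _ this
    have hbc : b = c := g_inj g hgbc
    have hb0 : ({v} : Set VS) ∆ {u} = ⊥ := by
      rw [← hab, ← hac, sd_cancel_left, hbc, symmDiff_self]
    exact hvu (Set.singleton_eq_singleton_iff.1 (symmDiff_eq_bot.1 hb0))
  · rw [hv1, hv2, ← h]

lemma labelB_aux (g : GammaComp ES s ≃g GammaComp ET t) (n : ℕ) :
    ∀ (a b a' b' : ↥(Comp ES s)) (v : VS), a.1.1 ∆ b.1.1 = {v} → a'.1.1 ∆ b'.1.1 = {v} →
    v ∉ a.1.1 → v ∉ a'.1.1 → (a.1.1 ∆ a'.1.1).ncard = n →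
    (g a).1.1 ∆ (g b).1.1 = (g a').1.1 ∆ (g b').1.1 := by
  induction n using Nat.strong_induction_on with
  | _ n IH =>
  intro a b a' b' v hab hab' hva hva' hcard
  have hfin : (a.1.1 ∆ a'.1.1).Finite := comp_sd_fin a a'
  by_cases heq : a.1.1 = a'.1.1
  · have ha : a = a' := compC_ext heq
    have hb : b = b' := compC_ext (by rw [eq_of_sd hab, eq_of_sd hab', heq])
    rw [ha, hb]
  · obtain ⟨u, hu⟩ : (a.1.1 ∆ a'.1.1).Nonempty :=
      Set.nonempty_iff_ne_empty.2 (fun h => heq (symmDiff_eq_bot.1 h))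
    have hune : u ≠ v := by
      rintro rfl
      rcases Set.mem_symmDiff.1 hu with h | h
      · exact hva h.1
      · exact hva' h.1
    rcases Set.mem_symmDiff.1 hu with ⟨hua, hua'⟩ | ⟨hua', hua⟩
    · -- u ∈ a \ a' : shrink a
      have hub : u ∈ b.1.1 := by
        rw [eq_of_sd hab]
        exact Set.mem_symmDiff.2 (Or.inl ⟨hua, hune⟩)
      have ha2i : Indep ES (a.1.1 \ {u}) := indep_mono_s8 Set.diff_subset a.1.2
      have ha2f : (s ∆ (a.1.1 \ {u})).Finite :=
        ((a.2.union (Set.finite_singleton u)).subset (sd_diff_subset s a.1.1 u))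
      have hb2i : Indep ES (b.1.1 \ {u}) := indep_mono_s8 Set.diff_subset b.1.2
      have hb2f : (s ∆ (b.1.1 \ {u})).Finite :=
        ((b.2.union (Set.finite_singleton u)).subset (sd_diff_subset s b.1.1 u))
      set a2 : ↥(Comp ES s) := mkC _ ha2i ha2f with ha2def
      set b2 : ↥(Comp ES s) := mkC _ hb2i hb2f with hb2def
      have haa2 : a.1.1 ∆ a2.1.1 = {u} := sd_erase hua
      have hbb2 : b.1.1 ∆ b2.1.1 = {u} := sd_erase hub
      have ha2b2 : a2.1.1 ∆ b2.1.1 = {v} := by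
        show (a.1.1 \ {u}) ∆ (b.1.1 \ {u}) = {v}
        rw [diff_sd_diff hua hub, hab]
        ext x
        simp only [Set.mem_diff, Set.mem_singleton_iff]
        constructor
        · rintro ⟨rfl, _⟩; rfl
        · rintro rfl; exact ⟨rfl, fun h => hune h.symm⟩
      have hsq := square g (fun h => hune h.symm) hab ha2b2 haa2 hbb2
      rw [hsq]
      have hva2 : v ∉ a2.1.1 := fun h => hva h.1
      have hstep : a2.1.1 ∆ a'.1.1 = (a.1.1 ∆ a'.1.1) \ {u} := sd_diff_singleton hua'
      have hlt : (a2.1.1 ∆ a'.1.1).ncard < n := by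
        rw [hstep, ← hcard]
        exact Set.ncard_diff_singleton_lt_of_mem hu hfin
      exact IH _ hlt a2 b2 a' b' v ha2b2 hab' hva2 hva' rfl
    · -- u ∈ a' \ a : shrink a'
      have hub' : u ∈ b'.1.1 := by
        rw [eq_of_sd hab']
        exact Set.mem_symmDiff.2 (Or.inl ⟨hua', hune⟩)
      have ha2i : Indep ES (a'.1.1 \ {u}) := indep_mono_s8 Set.diff_subset a'.1.2
      have ha2f : (s ∆ (a'.1.1 \ {u})).Finite :=
        ((a'.2.union (Set.finite_singleton u)).subset (sd_diff_subset s a'.1.1 u))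
      have hb2i : Indep ES (b'.1.1 \ {u}) := indep_mono_s8 Set.diff_subset b'.1.2
      have hb2f : (s ∆ (b'.1.1 \ {u})).Finite :=
        ((b'.2.union (Set.finite_singleton u)).subset (sd_diff_subset s b'.1.1 u))
      set a2 : ↥(Comp ES s) := mkC _ ha2i ha2f with ha2def
      set b2 : ↥(Comp ES s) := mkC _ hb2i hb2f with hb2def
      have haa2 : a'.1.1 ∆ a2.1.1 = {u} := sd_erase hua'
      have hbb2 : b'.1.1 ∆ b2.1.1 = {u} := sd_erase hub'
      have ha2b2 : a2.1.1 ∆ b2.1.1 = {v} := by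
        show (a'.1.1 \ {u}) ∆ (b'.1.1 \ {u}) = {v}
        rw [diff_sd_diff hua' hub', hab']
        ext x
        simp only [Set.mem_diff, Set.mem_singleton_iff]
        constructor
        · rintro ⟨rfl, _⟩; rfl
        · rintro rfl; exact ⟨rfl, fun h => hune h.symm⟩
      have hsq := square g (fun h => hune h.symm) hab' ha2b2 haa2 hbb2
      rw [hsq]
      have hva2 : v ∉ a2.1.1 := fun h => hva' h.1
      have hstep : a.1.1 ∆ a2.1.1 = (a.1.1 ∆ a'.1.1) \ {u} := by
        show a.1.1 ∆ (a'.1.1 \ {u}) = _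
        rw [symmDiff_comm, sd_diff_singleton hua, symmDiff_comm]
      have hlt : (a.1.1 ∆ a2.1.1).ncard < n := by
        rw [hstep, ← hcard]
        exact Set.ncard_diff_singleton_lt_of_mem hu hfin
      exact IH _ hlt a b a2 b2 v hab ha2b2 hva hva2 rfl

lemma labelB (g : GammaComp ES s ≃g GammaComp ET t) {a b a' b' : ↥(Comp ES s)} {v : VS}
    (hab : a.1.1 ∆ b.1.1 = {v}) (hab' : a'.1.1 ∆ b'.1.1 = {v}) :
    (g a).1.1 ∆ (g b).1.1 = (g a').1.1 ∆ (g b').1.1 := by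
  have key : ∀ (c d : ↥(Comp ES s)), c.1.1 ∆ d.1.1 = {v} → v ∉ c.1.1 ∨ v ∉ d.1.1 := by
    intro c d hcd
    by_contra h
    push_neg at h
    have : v ∉ c.1.1 ∆ d.1.1 := fun hh => by
      rcases Set.mem_symmDiff.1 hh with hh | hh
      · exact hh.2 h.2
      · exact hh.2 h.1
    exact this (hcd ▸ rfl)
  rcases key a b hab with hva | hvb
  · rcases key a' b' hab' with hva' | hvb'
    · exact labelB_aux g _ a b a' b' v hab hab' hva hva' rfl
    · have h2 : b'.1.1 ∆ a'.1.1 = {v} := by rwa [symmDiff_comm]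
      rw [symmDiff_comm (g a').1.1]
      exact labelB_aux g _ a b b' a' v hab h2 hva hvb' rfl
  · rcases key a' b' hab' with hva' | hvb'
    · have h1 : b.1.1 ∆ a.1.1 = {v} := by rwa [symmDiff_comm]
      rw [symmDiff_comm (g a).1.1]
      exact labelB_aux g _ b a a' b' v h1 hab' hvb hva' rfl
    · have h1 : b.1.1 ∆ a.1.1 = {v} := by rwa [symmDiff_comm]
      have h2 : b'.1.1 ∆ a'.1.1 = {v} := by rwa [symmDiff_comm]
      rw [symmDiff_comm (g a).1.1, symmDiff_comm (g a').1.1]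
      exact labelB_aux g _ b a b' a' v h1 h2 hvb hvb' rfl

variable (ES ET s t) in
def ymem (hsimp : SimpleHG ES) (hlf : LocFin ES) (hs : Indep ES s) (v : VS) : ↥(Comp ES s) :=
  mkC (yset ES s v) (yset_indep hsimp hs v) (yset_comp hlf v)

variable (ES ET s t) in
def xmem (hsimp : SimpleHG ES) (hlf : LocFin ES) (hs : Indep ES s) (v : VS) : ↥(Comp ES s) :=
  mkC (xset ES s v) (xset_indep hs v) (xset_comp hlf v)

lemma fmap_ex (hsimp : SimpleHG ES) (hlf : LocFin ES) (hs : Indep ES s)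
    (g : GammaComp ES s ≃g GammaComp ET t) (v : VS) :
    ∃ w, (g (ymem ES s hsimp hlf hs v)).1.1 ∆ (g (xmem ES s hsimp hlf hs v)).1.1 = {w} :=
  gamma_adj.1 (g.map_rel_iff.2 (gamma_adj.2 ⟨v, yset_sd_xset v⟩))

noncomputable def fmap (hsimp : SimpleHG ES) (hlf : LocFin ES) (hs : Indep ES s)
    (g : GammaComp ES s ≃g GammaComp ET t) (v : VS) : VT :=
  (fmap_ex hsimp hlf hs g v).choose

lemma fmap_spec (hsimp : SimpleHG ES) (hlf : LocFin ES) (hs : Indep ES s)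
    (g : GammaComp ES s ≃g GammaComp ET t) (v : VS) :
    (g (ymem ES s hsimp hlf hs v)).1.1 ∆ (g (xmem ES s hsimp hlf hs v)).1.1
      = {fmap hsimp hlf hs g v} :=
  (fmap_ex hsimp hlf hs g v).choose_spec

lemma flipg (hsimp : SimpleHG ES) (hlf : LocFin ES) (hs : Indep ES s)
    (g : GammaComp ES s ≃g GammaComp ET t) {a b : ↥(Comp ES s)} {v : VS}
    (h : a.1.1 ∆ b.1.1 = {v}) :
    (g a).1.1 ∆ (g b).1.1 = {fmap hsimp hlf hs g v} := by
  have hyx : (ymem ES s hsimp hlf hs v).1.1 ∆ (xmem ES s hsimp hlf hs v).1.1 = {v} :=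
    yset_sd_xset v
  rw [labelB g h hyx]
  exact fmap_spec hsimp hlf hs g v

lemma fmap_left_inv (hSsimp : SimpleHG ES) (hTsimp : SimpleHG ET) (hSlf : LocFin ES)
    (hTlf : LocFin ET) (hs : Indep ES s) (ht : Indep ET t)
    (g : GammaComp ES s ≃g GammaComp ET t) (v : VS) :
    fmap hTsimp hTlf ht g.symm (fmap hSsimp hSlf hs g v) = v := by
  have spec := fmap_spec hSsimp hSlf hs g v
  have h2 := flipg hTsimp hTlf ht g.symm spec
  rw [g.symm_apply_apply, g.symm_apply_apply] at h2
  have hyx : (ymem ES s hSsimp hSlf hs v).1.1 ∆ (xmem ES s hSsimp hSlf hs v).1.1 = {v} :=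
    yset_sd_xset v
  rw [hyx] at h2
  exact (Set.singleton_eq_singleton_iff.1 h2).symm

lemma not_mem_sd_iff {V : Type*} {x : V} {a b : Set V} (h : x ∉ a ∆ b) : x ∈ a ↔ x ∈ b := by
  constructor <;> intro hx <;> by_contra h2
  · exact h (Set.mem_symmDiff.2 (Or.inl ⟨hx, h2⟩))
  · exact h (Set.mem_symmDiff.2 (Or.inr ⟨hx, h2⟩))

lemma glue (hsimp : SimpleHG ES) (hlf : LocFin ES) (hs : Indep ES s)
    (g : GammaComp ES s ≃g GammaComp ET t)
    (hinj : Function.Injective (fmap hsimp hlf hs g)) (A : Finset VS) :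
    ∀ (z w : ↥(Comp ES s)),
      (∀ x ∈ A, x ∉ z.1.1) →
      (∀ B : Finset VS, B ⊆ A → Indep ES (z.1.1 ∪ (B : Set VS))) →
      w.1.1 = z.1.1 ∪ (A : Set VS) →
      (g w).1.1 = (g z).1.1 ∆ (fmap hsimp hlf hs g '' (A : Set VS)) := by
  induction A using Finset.induction_on with
  | empty =>
    intro z w _ _ hw
    have hwz : w = z := compC_ext (by rw [hw]; simp)
    rw [hwz]
    simp only [Finset.coe_empty, Set.image_empty]
    exact (symmDiff_bot _).symm
  | @insert a A ha IH =>
    intro z w hdisj hind hw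
    have hindA : Indep ES (z.1.1 ∪ (A : Set VS)) := hind A (Finset.subset_insert a A)
    have hfinA : (s ∆ (z.1.1 ∪ (A : Set VS))).Finite :=
      (z.2.union A.finite_toSet).subset (sd_union_subset s z.1.1 (A : Set VS))
    set w' : ↥(Comp ES s) := mkC _ hindA hfinA with hw'def
    have hIH : (g w').1.1 = (g z).1.1 ∆ (fmap hsimp hlf hs g '' (A : Set VS)) :=
      IH z w' (fun x hx => hdisj x (Finset.mem_insert_of_mem hx))
        (fun B hB => hind B (hB.trans (Finset.subset_insert a A))) rfl
    have hanotin : a ∉ z.1.1 ∪ (A : Set VS) := by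
      rintro (h | h)
      · exact hdisj a (Finset.mem_insert_self a A) h
      · exact ha (by exact_mod_cast h)
    have hedge : w'.1.1 ∆ w.1.1 = {a} := by
      have : w.1.1 = insert a (z.1.1 ∪ (A : Set VS)) := by
        rw [hw, Finset.coe_insert, Set.union_insert]
      rw [this]
      exact sd_insert hanotin
    have hflip := flipg hsimp hlf hs g hedge
    have hFa : fmap hsimp hlf hs g a ∉ fmap hsimp hlf hs g '' (A : Set VS) := by
      rintro ⟨x, hx, hfx⟩
      exact ha (by rw [← hinj hfx]; exact_mod_cast hx)
    rw [eq_of_sd hflip, hIH, symmDiff_assoc, sd_singleton_not_mem hFa,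
      Finset.coe_insert, Set.image_insert_eq]

lemma zsd {e : Finset VS} {u u' : VS} (hu : u ∈ e) (hu' : u' ∈ e) (huu' : u ≠ u') :
    (zset ES s e ∪ (↑(e.erase u) : Set VS)) ∆ (zset ES s e ∪ (↑(e.erase u') : Set VS))
      = {u, u'} := by
  have huz : u ∉ zset ES s e := mem_e_not_zset hu
  have hu'z : u' ∉ zset ES s e := mem_e_not_zset hu'
  ext x
  simp only [Set.mem_symmDiff, Set.mem_union, Finset.mem_coe, Finset.mem_erase,
    Set.mem_insert_iff, Set.mem_singleton_iff]
  constructor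
  · rintro (⟨h1, h2⟩ | ⟨h1, h2⟩)
    · rcases h1 with h | ⟨hne, hxe⟩
      · exact absurd (Or.inl h) h2
      · rcases eq_or_ne x u' with rfl | h'
        · exact Or.inr rfl
        · exact absurd (Or.inr ⟨h', hxe⟩) h2
    · rcases h1 with h | ⟨hne, hxe⟩
      · exact absurd (Or.inl h) h2
      · rcases eq_or_ne x u with rfl | h'
        · exact Or.inl rfl
        · exact absurd (Or.inr ⟨h', hxe⟩) h2
  · rintro (rfl | rfl)
    · exact Or.inr ⟨Or.inr ⟨huu', hu⟩, by rintro (h | ⟨h, _⟩) <;> [exact huz h; exact h rfl]⟩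
    · exact Or.inl ⟨Or.inr ⟨fun h => huu' h.symm, hu'⟩,
        by rintro (h | ⟨h, _⟩) <;> [exact hu'z h; exact h rfl]⟩

lemma claimD (hsimp : SimpleHG ES) (hlf : LocFin ES) (hs : Indep ES s)
    (g : GammaComp ES s ≃g GammaComp ET t)
    (hinj : Function.Injective (fmap hsimp hlf hs g))
    {e : Finset VS} (he : e ∈ ES) {z : ↥(Comp ES s)} (hz : z.1.1 = zset ES s e) :
    (∀ u ∈ e, fmap hsimp hlf hs g u ∉ (g z).1.1) ∧
    ∃ e' ∈ ET, fmap hsimp hlf hs g '' (e : Set VS) ⊆ (e' : Set VT) ∧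
      (e' : Set VT) ⊆ (g z).1.1 ∪ fmap hsimp hlf hs g '' (e : Set VS) := by
  set F := fmap hsimp hlf hs g with hF
  set q := (g z).1.1 with hq
  have hene : e.Nonempty := Finset.card_pos.1 (by have := hsimp.1 e he; omega)
  -- independence of extensions
  have hindB : ∀ B : Finset VS, B ⊆ e → B ≠ e → Indep ES (z.1.1 ∪ (B : Set VS)) := by
    intro B hB hBne
    rw [hz]
    exact zext_indep hsimp hs he hB hBne
  -- key: extension by e.erase u and its image
  have hkey : ∀ u ∈ e, ∃ m : ↥(Comp ES s), m.1.1 = z.1.1 ∪ (↑(e.erase u) : Set VS) ∧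
      (g m).1.1 = q ∆ (F '' (↑(e.erase u) : Set VS)) := by
    intro u hu
    have hBne : ∀ B : Finset VS, B ⊆ e.erase u → B ≠ e := by
      intro B hB hBe
      exact (Finset.notMem_erase u e) (hB (hBe ▸ hu))
    have hind : Indep ES (z.1.1 ∪ (↑(e.erase u) : Set VS)) :=
      hindB _ (Finset.erase_subset u e) (hBne _ le_rfl)
    have hfin : (s ∆ (z.1.1 ∪ (↑(e.erase u) : Set VS))).Finite :=
      (z.2.union (e.erase u).finite_toSet).subset (sd_union_subset _ _ _)
    refine ⟨mkC _ hind hfin, rfl, ?_⟩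
    exact glue hsimp hlf hs g hinj (e.erase u) z _
      (fun x hx => by
        rw [hz]; exact mem_e_not_zset (Finset.mem_of_mem_erase hx))
      (fun B hB => hindB B (hB.trans (Finset.erase_subset u e)) (hBne B hB)) rfl
  -- the image of e under F, as a set
  have hcoee : ∀ u ∈ e, (e : Set VS) = insert u (↑(e.erase u) : Set VS) := by
    intro u hu
    rw [← Finset.coe_insert, Finset.insert_erase hu]
  have hFe : ∀ u ∈ e, F '' (e : Set VS) = insert (F u) (F '' (↑(e.erase u) : Set VS)) := by
    intro u hu
    rw [hcoee u hu, Set.image_insert_eq]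
  have hFu_not : ∀ u ∈ e, F u ∉ F '' (↑(e.erase u) : Set VS) := by
    rintro u hu ⟨x, hx, hfx⟩
    have : x = u := hinj hfx
    exact (Finset.notMem_erase u e) (this ▸ hx)
  -- step 1 : q ∆ F[e] is not independent
  have hni : ¬ Indep ET (q ∆ (F '' (e : Set VS))) := by
    intro hind
    have hfinT : (t ∆ (q ∆ (F '' (e : Set VS)))).Finite := by
      refine ((g z).2.union (e.finite_toSet.image F)).subset ?_
      have h1 := symmDiff_triangle t q (q ∆ (F '' (e : Set VS)))
      rwa [symmDiff_symmDiff_cancel_left] at h1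
    set tc : ↥(Comp ET t) := mkC _ hind hfinT with htc
    set r' : ↥(Comp ES s) := g.symm tc with hr'
    obtain ⟨u, hu, u', hu', huu'⟩ := Finset.one_lt_card.1 (hsimp.1 e he)
    obtain ⟨m, hm1, hm2⟩ := hkey u hu
    obtain ⟨m', hm1', hm2'⟩ := hkey u' hu'
    have hadj : ∀ (u0 : VS) (hu0 : u0 ∈ e) (m0 : ↥(Comp ES s)),
        (g m0).1.1 = q ∆ (F '' (↑(e.erase u0) : Set VS)) →
        ∃ x, r'.1.1 ∆ m0.1.1 = {x} := by
      intro u0 hu0 m0 hm0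
      have hsd : tc.1.1 ∆ (g m0).1.1 = {F u0} := by
        show (q ∆ (F '' (e : Set VS))) ∆ (g m0).1.1 = {F u0}
        rw [hm0, sd_cancel_left, hFe u0 hu0, symmDiff_comm]
        exact sd_insert (hFu_not u0 hu0)
      have hadjT : (GammaComp ET t).Adj tc (g m0) := gamma_adj.2 ⟨F u0, hsd⟩
      have := g.symm.map_rel_iff.2 hadjT
      rw [g.symm_apply_apply] at this
      exact gamma_adj.1 this
    obtain ⟨x, hx⟩ := hadj u hu m hm2
    obtain ⟨x', hx'⟩ := hadj u' hu' m' hm2'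
    have hpair : ({x} : Set VS) ∆ {x'} = {u, u'} := by
      rw [← hx, ← hx', sd_cancel_left, hm1, hm1', hz]
      exact zsd hu hu' huu'
    have hxx' : x ≠ x' := by
      rintro rfl
      rw [symmDiff_self] at hpair
      have : u ∈ (⊥ : Set VS) := hpair ▸ Set.mem_insert u {u'}
      exact this
    have hxmem : x ∈ ({u, u'} : Set VS) := by
      rw [← hpair, sd_pair hxx']
      exact Set.mem_insert x {x'}
    have hr'eq : r'.1.1 = m.1.1 ∆ {x} := by
      have h2 : m.1.1 ∆ r'.1.1 = {x} := by rwa [symmDiff_comm] at hx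
      exact eq_of_sd h2
    rcases hxmem with rfl | rfl
    · -- x = u : r' contains e, contradiction
      have hxm : x ∉ m.1.1 := by
        rw [hm1, hz]
        rintro (h | h)
        · exact mem_e_not_zset hu h
        · exact Finset.notMem_erase x e (by exact_mod_cast h)
      have : (e : Set VS) ⊆ r'.1.1 := by
        rw [hr'eq, sd_singleton_not_mem hxm, hm1, hcoee x hu]
        intro y hy
        rcases hy with rfl | hy
        · exact Set.mem_insert _ _
        · exact Set.mem_insert_of_mem _ (Or.inr hy)
      exact r'.1.2 e he this
    · -- x = u' : r' = z ∪ (e.erase u).erase u', cancellation contradiction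
      have hxm : x ∈ m.1.1 := by
        rw [hm1]
        exact Or.inr (by exact_mod_cast Finset.mem_erase.2 ⟨fun h => huu' h.symm, hu'⟩)
      have hr'2 : r'.1.1 = z.1.1 ∪ (↑((e.erase u).erase x) : Set VS) := by
        rw [hr'eq, sd_singleton_mem hxm, hm1]
        ext y
        simp only [Set.mem_diff, Set.mem_union, Finset.mem_coe, Finset.mem_erase,
          Set.mem_singleton_iff]
        constructor
        · rintro ⟨(h | h), hne⟩
          · exact Or.inl h
          · exact Or.inr ⟨hne, by exact_mod_cast h⟩
        · rintro (h | ⟨hne, h⟩)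
          · refine ⟨Or.inl h, ?_⟩
            rintro rfl
            rw [hz] at h
            exact mem_e_not_zset hu' h
          · exact ⟨Or.inr h, hne⟩
      have hgr' : (g r').1.1 = q ∆ (F '' (↑((e.erase u).erase x) : Set VS)) := by
        refine glue hsimp hlf hs g hinj _ z r' ?_ ?_ hr'2
        · intro y hy
          rw [hz]
          exact mem_e_not_zset (Finset.mem_of_mem_erase (Finset.mem_of_mem_erase hy))
        · intro B hB
          refine hindB B (hB.trans ((Finset.erase_subset _ _).trans (Finset.erase_subset _ _))) ?_
          intro hBe
          exact (Finset.notMem_erase u e) ((hB.trans (Finset.erase_subset x _)) (hBe ▸ hu))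
      have hgr'2 : (g r').1.1 = q ∆ (F '' (e : Set VS)) := by
        rw [hr', g.apply_symm_apply]
        rfl
      have hcancel : F '' (e : Set VS) = F '' (↑((e.erase u).erase x) : Set VS) := by
        have := hgr'2.symm.trans hgr'
        exact symmDiff_right_injective q this
      have : F u ∈ F '' (↑((e.erase u).erase x) : Set VS) := by
        rw [← hcancel]
        exact ⟨u, by exact_mod_cast hu, rfl⟩
      obtain ⟨w, hw, hfw⟩ := this
      have : w = u := hinj hfw
      subst this
      exact (Finset.notMem_erase w e) (Finset.mem_of_mem_erase (by exact_mod_cast hw))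
  -- step 2 : extract an edge
  have hex : ∃ e' ∈ ET, (e' : Set VT) ⊆ q ∆ (F '' (e : Set VS)) := by
    by_contra h
    push_neg at h
    exact hni (fun e' he' hsub => (h e' he') hsub)
  obtain ⟨e', he', hsub⟩ := hex
  -- step 3 : every F u (u ∈ e) lies in e'
  have hmain : ∀ u ∈ e, F u ∈ (e' : Set VT) := by
    intro u hu
    by_contra hFu
    obtain ⟨m, hm1, hm2⟩ := hkey u hu
    refine (g m).1.2 e' he' ?_
    rw [hm2]
    intro y hy
    have hy2 : y ∈ q ∆ (F '' (e : Set VS)) := hsub hy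
    have hyne : y ≠ F u := fun h => hFu (h ▸ hy)
    rcases Set.mem_symmDiff.1 hy2 with ⟨h1, h2⟩ | ⟨h1, h2⟩
    · exact Set.mem_symmDiff.2 (Or.inl ⟨h1, fun hh =>
        h2 (by rw [hFe u hu]; exact Set.mem_insert_of_mem _ hh)⟩)
    · refine Set.mem_symmDiff.2 (Or.inr ⟨?_, h2⟩)
      rw [hFe u hu] at h1
      rcases h1 with h | h
      · exact absurd h hyne
      · exact h
  have hnotq : ∀ u ∈ e, F u ∉ q := by
    intro u hu hFq
    have h1 : F u ∈ q ∆ (F '' (e : Set VS)) := hsub (hmain u hu)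
    rcases Set.mem_symmDiff.1 h1 with ⟨_, h2⟩ | ⟨_, h2⟩
    · exact h2 ⟨u, by exact_mod_cast hu, rfl⟩
    · exact h2 hFq
  refine ⟨hnotq, e', he', ?_, ?_⟩
  · rintro y ⟨x, hx, rfl⟩
    exact hmain x (by exact_mod_cast hx)
  · intro y hy
    rcases Set.mem_symmDiff.1 (hsub hy) with ⟨h1, _⟩ | ⟨h1, _⟩
    · exact Or.inl h1
    · exact Or.inr h1

lemma memchain_aux (hsimp : SimpleHG ES) (hlf : LocFin ES) (hs : Indep ES s)
    (g : GammaComp ES s ≃g GammaComp ET t)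
    (hinj : Function.Injective (fmap hsimp hlf hs g)) (n : ℕ) :
    ∀ (r1 r2 : ↥(Comp ES s)) (v : VS), r2.1.1 ⊆ r1.1.1 → v ∈ r2.1.1 →
    (r1.1.1 \ r2.1.1).ncard = n →
    (fmap hsimp hlf hs g v ∈ (g r1).1.1 ↔ fmap hsimp hlf hs g v ∈ (g r2).1.1) := by
  induction n using Nat.strong_induction_on with
  | _ n IH =>
  intro r1 r2 v hsub hv hcard
  have hfin : (r1.1.1 \ r2.1.1).Finite := by
    refine (comp_sd_fin r1 r2).subset ?_
    intro x hx
    exact Set.mem_symmDiff.2 (Or.inl ⟨hx.1, hx.2⟩)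
  by_cases h0 : r1.1.1 = r2.1.1
  · rw [compC_ext h0]
  · have hne : (r1.1.1 \ r2.1.1).Nonempty := by
      rw [Set.nonempty_iff_ne_empty]
      intro h
      exact h0 (le_antisymm (Set.diff_eq_empty.1 h) hsub)
    obtain ⟨u, hu⟩ := hne
    have huv : u ≠ v := fun h => hu.2 (h ▸ hv)
    have hind3 : Indep ES (r1.1.1 \ {u}) := indep_mono_s8 Set.diff_subset r1.1.2
    have hfin3 : (s ∆ (r1.1.1 \ {u})).Finite :=
      (r1.2.union (Set.finite_singleton u)).subset (sd_diff_subset s r1.1.1 u)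
    set r3 : ↥(Comp ES s) := mkC _ hind3 hfin3 with hr3
    have hedge : r1.1.1 ∆ r3.1.1 = {u} := sd_erase hu.1
    have hflip := flipg hsimp hlf hs g hedge
    have hFne : fmap hsimp hlf hs g v ≠ fmap hsimp hlf hs g u := fun h => huv (hinj h).symm
    have htrans : (fmap hsimp hlf hs g v ∈ (g r1).1.1 ↔ fmap hsimp hlf hs g v ∈ (g r3).1.1) :=
      not_mem_sd_iff (by rw [hflip]; simpa using hFne)
    have hsub3 : r2.1.1 ⊆ r3.1.1 := fun x hx => ⟨hsub hx, fun hh => hu.2 (hh ▸ hx)⟩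
    have hdiff : r3.1.1 \ r2.1.1 = (r1.1.1 \ r2.1.1) \ {u} := by
      show (r1.1.1 \ {u}) \ r2.1.1 = _
      rw [Set.diff_diff_comm]
    have hlt : (r3.1.1 \ r2.1.1).ncard < n := by
      rw [hdiff, ← hcard]
      exact Set.ncard_diff_singleton_lt_of_mem hu hfin
    exact htrans.trans (IH _ hlt r3 r2 v hsub3 hv rfl)

lemma mem_of_mem (hsimp : SimpleHG ES) (hlf : LocFin ES) (hs : Indep ES s)
    (hni : ∀ v : VS, ∃ e ∈ ES, v ∈ e)
    (g : GammaComp ES s ≃g GammaComp ET t)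
    (hinj : Function.Injective (fmap hsimp hlf hs g))
    (r : ↥(Comp ES s)) (v : VS) (hv : v ∈ r.1.1) :
    fmap hsimp hlf hs g v ∈ (g r).1.1 := by
  set F := fmap hsimp hlf hs g with hF
  obtain ⟨e, he, hve⟩ := hni v
  set z : ↥(Comp ES s) := mkC (zset ES s e) (zset_indep hs) (zset_comp hlf) with hzdef
  have hD := claimD hsimp hlf hs g hinj he (rfl : z.1.1 = zset ES s e)
  have hFq : F v ∉ (g z).1.1 := hD.1 v hve
  have hene : ({v} : Finset VS) ≠ e := by
    intro h
    have := hsimp.1 e he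
    rw [← h] at this
    simp at this
  have hindm : ∀ B : Finset VS, B ⊆ ({v} : Finset VS) → Indep ES (z.1.1 ∪ (B : Set VS)) := by
    intro B hB
    rcases Finset.subset_singleton_iff.1 hB with rfl | rfl
    · exact zext_indep hsimp hs he (Finset.empty_subset e)
        (fun h => by simpa [← h] using hsimp.1 e he)
    · exact zext_indep hsimp hs he (by simpa using hve) hene
  have hfinm : (s ∆ (z.1.1 ∪ ((({v} : Finset VS)) : Set VS))).Finite :=
    (z.2.union (Finset.finite_toSet _)).subset (sd_union_subset _ _ _)
  set m : ↥(Comp ES s) := mkC _ (hindm _ le_rfl) hfinm with hmdef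
  have hgm : (g m).1.1 = (g z).1.1 ∆ (F '' ((({v} : Finset VS)) : Set VS)) :=
    glue hsimp hlf hs g hinj {v} z m
      (fun x hx => by
        have : x = v := by simpa using hx
        subst this
        exact mem_e_not_zset hve)
      hindm rfl
  have hFm : F v ∈ (g m).1.1 := by
    rw [hgm]
    exact Set.mem_symmDiff.2 (Or.inr ⟨⟨v, by simp, rfl⟩, hFq⟩)
  have hvm : v ∈ m.1.1 := Or.inr (by simp)
  have hindm' : Indep ES (r.1.1 ∩ m.1.1) := indep_mono_s8 Set.inter_subset_left r.1.2
  have hfinm' : (s ∆ (r.1.1 ∩ m.1.1)).Finite :=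
    (r.2.union m.2).subset (sd_inter_subset s r.1.1 m.1.1)
  set m' : ↥(Comp ES s) := mkC _ hindm' hfinm' with hm'def
  have hvm' : v ∈ m'.1.1 := ⟨hv, hvm⟩
  have h1 := memchain_aux hsimp hlf hs g hinj _ r m' v Set.inter_subset_left hvm' rfl
  have h2 := memchain_aux hsimp hlf hs g hinj _ m m' v Set.inter_subset_right hvm' rfl
  rw [h1, ← h2]
  exact hFm

lemma edge_image (hSsimp : SimpleHG ES) (hTsimp : SimpleHG ET) (hSlf : LocFin ES)
    (hTlf : LocFin ET) (hs : Indep ES s) (ht : Indep ET t)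
    (g : GammaComp ES s ≃g GammaComp ET t)
    (hinj : Function.Injective (fmap hSsimp hSlf hs g))
    (hinj' : Function.Injective (fmap hTsimp hTlf ht g.symm))
    (hli : ∀ v, fmap hTsimp hTlf ht g.symm (fmap hSsimp hSlf hs g v) = v)
    (hri : ∀ w, fmap hSsimp hSlf hs g (fmap hTsimp hTlf ht g.symm w) = w)
    {e : Finset VS} (he : e ∈ ES) :
    ∃ e' ∈ ET, (e' : Set VT) = fmap hSsimp hSlf hs g '' (e : Set VS) := by
  set f := fmap hSsimp hSlf hs g with hf
  set f' := fmap hTsimp hTlf ht g.symm with hf'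
  set z : ↥(Comp ES s) := mkC (zset ES s e) (zset_indep hs) (zset_comp hSlf) with hzdef
  obtain ⟨-, e', he', hfe, -⟩ := claimD hSsimp hSlf hs g hinj he (rfl : z.1.1 = zset ES s e)
  set z' : ↥(Comp ET t) := mkC (zset ET t e') (zset_indep ht) (zset_comp hTlf) with hz'def
  obtain ⟨-, e1, he1, hf'e', -⟩ :=
    claimD hTsimp hTlf ht g.symm hinj' he' (rfl : z'.1.1 = zset ET t e')
  have hsub1 : (e : Set VS) ⊆ f' '' (e' : Set VT) := by
    intro x hx
    exact ⟨f x, hfe ⟨x, hx, rfl⟩, hli x⟩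
  have hsub2 : (e : Set VS) ⊆ (e1 : Set VS) := hsub1.trans hf'e'
  have hee1 : e = e1 := hSsimp.2 e he e1 he1 (by exact_mod_cast hsub2)
  have h3 : f' '' (e' : Set VT) = (e : Set VS) := by
    apply le_antisymm (hee1 ▸ hf'e') hsub1
  refine ⟨e', he', ?_⟩
  ext w
  constructor
  · intro hw
    have : f' w ∈ (e : Set VS) := h3 ▸ ⟨w, hw, rfl⟩
    exact ⟨f' w, this, hri w⟩
  · rintro ⟨x, hx, rfl⟩
    have : x ∈ f' '' (e' : Set VT) := h3.symm ▸ hx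
    obtain ⟨w, hw, hww⟩ := this
    have : f x = w := by rw [← hww, hri w]
    exact this ▸ hw

end TwoSide

theorem stmt8 {VS VT : Type*} (ES : Set (Finset VS)) (ET : Set (Finset VT))
    (hSsimp : SimpleHG ES) (hTsimp : SimpleHG ET) (hSlf : LocFin ES) (hTlf : LocFin ET)
    (hSni : ∀ v : VS, ∃ e ∈ ES, v ∈ e) (hTni : ∀ v : VT, ∃ e ∈ ET, v ∈ e)
    (s : Set VS) (t : Set VT) (hs : Indep ES s) (ht : Indep ET t)
    (g : GammaComp ES s ≃g GammaComp ET t) :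
    ∃ f : VS → VT, IsIsoHG ES ET f ∧ ∀ r : Comp ES s, (g r).1.1 = f '' r.1.1 := by
  classical
  set f := fmap hSsimp hSlf hs g with hf
  set f' := fmap hTsimp hTlf ht g.symm with hf'
  have hli : ∀ v, f' (f v) = v := fmap_left_inv hSsimp hTsimp hSlf hTlf hs ht g
  have hri : ∀ w, f (f' w) = w := fun w =>
    fmap_left_inv hTsimp hSsimp hTlf hSlf ht hs g.symm w
  have hinj : Function.Injective f := Function.LeftInverse.injective hli
  have hinj' : Function.Injective f' := Function.LeftInverse.injective hri
  have hsurj : Function.Surjective f := fun w => ⟨f' w, hri w⟩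
  have hmem : ∀ (r : ↥(Comp ES s)) (v : VS), v ∈ r.1.1 → f v ∈ (g r).1.1 :=
    fun r v hv => mem_of_mem hSsimp hSlf hs hSni g hinj r v hv
  have hmem' : ∀ (q : ↥(Comp ET t)) (w : VT), w ∈ q.1.1 → f' w ∈ (g.symm q).1.1 :=
    fun q w hw => mem_of_mem hTsimp hTlf ht hTni g.symm hinj' q w hw
  have himg : ∀ r : ↥(Comp ES s), (g r).1.1 = f '' r.1.1 := by
    intro r
    ext w
    constructor
    · intro hw
      have h1 := hmem' (g r) w hw
      rw [g.symm_apply_apply] at h1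
      exact ⟨f' w, h1, hri w⟩
    · rintro ⟨v, hv, rfl⟩
      exact hmem r v hv
  have himgset : ∀ X : Set VS, f' '' (f '' X) = X := by
    intro X
    ext x
    constructor
    · rintro ⟨y, ⟨x', hx', rfl⟩, rfl⟩
      rwa [hli x']
    · intro hx
      exact ⟨f x, ⟨x, hx, rfl⟩, hli x⟩
  refine ⟨f, ⟨⟨hinj, hsurj⟩, ?_⟩, fun r => himg r⟩
  intro e
  constructor
  · intro he
    exact edge_image hSsimp hTsimp hSlf hTlf hs ht g hinj hinj' hli hri he
  · rintro ⟨e', he', heq⟩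
    obtain ⟨e1, he1, heq'⟩ :=
      edge_image hTsimp hSsimp hTlf hSlf ht hs g.symm hinj' hinj hri hli he'
    have h2 : (e1 : Set VS) = (e : Set VS) := by rw [heq', heq, himgset]
    have h3 : e1 = e := Finset.coe_injective h2
    rwa [← h3]
end

section
/- Let S be a simple, locally finite hypergraph with no isolated vertices, let s be an independent subset, and let b be a subset of V(S) such that for every independent set r with finite symmetric difference from s, the set r ⊕ b is also independent. Then b = ∅. -/
open scoped symmDiff

variable {V : Type*}

theorem stmt9 (E : Set (Finset V)) (hsimp : SimpleHG E) (hlf : LocFin E)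
    (hni : ∀ v : V, ∃ e ∈ E, v ∈ e)
    (s : Set V) (hs : Indep E s) (b : Set V)
    (hb : ∀ r : Set V, Indep E r → (s ∆ r).Finite → Indep E (r ∆ b)) :
    b = ∅ := by
  by_contra hne
  obtain ⟨v, hv⟩ := Set.nonempty_iff_ne_empty.2 hne
  obtain ⟨e, heE, hve⟩ := hni v
  set A : Set V := ⋃ w ∈ (e : Set V), ⋃ f ∈ {f ∈ E | w ∈ f}, (f : Set V) with hA
  have hAfin : A.Finite :=
    e.finite_toSet.biUnion fun w _ => (hlf w).biUnion fun f _ => f.finite_toSet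
  have hsubA : ∀ f ∈ E, ∀ w ∈ f, w ∈ (e : Set V) → (f : Set V) ⊆ A := by
    intro f hf w hwf hwe x hx
    exact Set.mem_biUnion hwe (Set.mem_biUnion (by exact ⟨hf, hwf⟩) hx)
  have heA : (e : Set V) ⊆ A := fun w hw => hsubA e heE w hw hw hw
  set r : Set V := (s \ A) ∪ ((e : Set V) \ b) with hr
  have hrInd : Indep E r := by
    intro e' he' hsub
    by_cases hcase : (e' : Set V) ⊆ s \ A
    · exact (hs e' he' fun x hx => (hcase hx).1).elim
    · obtain ⟨w, hwe', hwns⟩ := Set.not_subset.1 hcase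
      have hweb : w ∈ (e : Set V) \ b := (hsub hwe').resolve_left hwns
      have he'A : (e' : Set V) ⊆ A := hsubA e' he' w hwe' hweb.1
      have he'e : (e' : Set V) ⊆ (e : Set V) := by
        intro x hx
        rcases hsub hx with h | h
        · exact absurd (he'A hx) h.2
        · exact h.1
      have : e' = e := hsimp.2 e' he' e heE (fun x hx => by exact_mod_cast he'e hx)
      subst this
      rcases hsub hve with h | h
      · exact h.2 (heA hve)
      · exact h.2 hv
  have hfin : (s ∆ r).Finite := by
    refine hAfin.subset fun x hx => ?_
    rcases Set.mem_symmDiff.1 hx with ⟨hxs, hxr⟩ | ⟨hxr, hxs⟩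
    · by_contra hxA
      exact hxr (Or.inl ⟨hxs, hxA⟩)
    · rcases hxr with h | h
      · exact absurd h.1 hxs
      · exact heA h.1
  refine hb r hrInd hfin e heE fun w hw => ?_
  by_cases hwb : w ∈ b
  · exact Set.mem_symmDiff.2 (Or.inr ⟨hwb, fun hwr => by
      rcases hwr with h | h
      · exact h.2 (heA hw)
      · exact h.2 hwb⟩)
  · exact Set.mem_symmDiff.2 (Or.inl ⟨Or.inr ⟨hw, hwb⟩, hwb⟩)
end
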